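/- Let a² < 1 and μ > 0. Then as ε → 0⁺, the distributions f ↦ ∫_ℝ f(x) (1/x) Θ(x - [(1+x)² - a²]ε) dx + ln(μ(1-a²)ε e^{-γ}) f(0) converge (for every Schwartz f) to ⟨pv_μ Θ(x)/x, f⟩ = -∫₀^∞ f'(x) ln(μx) dx - γ f(0). -/

import Mathlib

open MeasureTheory Filter Set

lemma integrableOn_log_Ioc01 : IntegrableOn Real.log (Set.Ioc (0:ℝ) 1) := by
  have hb : IntegrableOn (fun x : ℝ => x ^ (-(1/2) : ℝ)) (Set.Ioc (0:ℝ) 1) := by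
    have h := intervalIntegral.intervalIntegrable_rpow' (a := 0) (b := 1)
      (r := -(1/2)) (by norm_num)
    rwa [intervalIntegrable_iff_integrableOn_Ioc_of_le zero_le_one] at h
  refine (hb.const_mul 2).mono' Real.measurable_log.aestronglyMeasurable.restrict ?_
  rw [ae_restrict_iff' measurableSet_Ioc]
  refine ae_of_all _ fun x hx => ?_
  have h1 : Real.log (x ^ (-(1/2):ℝ)) = (-(1/2)) * Real.log x := Real.log_rpow hx.1 _
  have h2 : Real.log (x ^ (-(1/2):ℝ)) ≤ x ^ (-(1/2):ℝ) - 1 :=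
    Real.log_le_sub_one_of_pos (Real.rpow_pos_of_pos hx.1 _)
  have h3 : Real.log x ≤ 0 := Real.log_nonpos hx.1.le hx.2
  have h4 : (0:ℝ) < x ^ (-(1/2):ℝ) := Real.rpow_pos_of_pos hx.1 _
  rw [Real.norm_eq_abs, abs_of_nonpos h3]
  linarith

lemma tendsto_mul_log_nhdsGT_zero (μ : ℝ) (hμ : 0 < μ) :
    Tendsto (fun x : ℝ => x * Real.log (μ * x)) (nhdsWithin 0 (Set.Ioi 0)) (nhds 0) := by
  have h1 : Tendsto (fun x : ℝ => Real.log x * x ^ (1:ℝ)) (nhdsWithin 0 (Set.Ioi 0)) (nhds 0) :=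
    tendsto_log_mul_rpow_nhdsGT_zero one_pos
  have h2 : Tendsto (fun x : ℝ => x * Real.log μ) (nhdsWithin 0 (Set.Ioi 0)) (nhds 0) := by
    have : Tendsto (fun x : ℝ => x * Real.log μ) (nhds 0) (nhds (0 * Real.log μ)) := (continuous_id.mul continuous_const).tendsto 0
    simpa using this.mono_left nhdsWithin_le_nhds
  have h3 := h2.add h1
  rw [add_zero] at h3
  refine h3.congr' ?_
  filter_upwards [self_mem_nhdsWithin] with x (hx : 0 < x)
  rw [Real.rpow_one, Real.log_mul hμ.ne' hx.ne']
  ring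

section helpers
variable (μ : ℝ) (f : SchwartzMap ℝ ℝ)

lemma pv_derivBound : ∀ x : ℝ, |deriv f x| ≤ (SchwartzMap.seminorm ℝ 0 0) (SchwartzMap.derivCLM ℝ ℝ f) := by
  intro x
  have := SchwartzMap.norm_le_seminorm ℝ (SchwartzMap.derivCLM ℝ ℝ f) x
  simpa [SchwartzMap.derivCLM_apply] using this

lemma pv_lip : ∀ x : ℝ, |f x - f 0| ≤ (SchwartzMap.seminorm ℝ 0 0) (SchwartzMap.derivCLM ℝ ℝ f) * |x| := by
  intro x
  have h := Convex.norm_image_sub_le_of_norm_hasDerivWithin_le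
    (f' := fun y => deriv f y) (fun y _ => f.differentiableAt.hasDerivAt.hasDerivWithinAt)
    (fun y _ => by simpa [Real.norm_eq_abs] using pv_derivBound f y)
    (convex_univ) (mem_univ (0:ℝ)) (mem_univ x)
  simpa [Real.norm_eq_abs] using h

lemma pv_intA0 : IntegrableOn (fun x : ℝ => (f x - f 0)/x) (Set.Ioc 0 1) := by
  set C := (SchwartzMap.seminorm ℝ 0 0) (SchwartzMap.derivCLM ℝ ℝ f) with hC
  have hmeas : AEStronglyMeasurable (fun x : ℝ => (f x - f 0)/x)
      (volume.restrict (Set.Ioc 0 1)) :=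
    ((f.continuous.measurable.sub measurable_const).div measurable_id).aestronglyMeasurable
  refine (integrableOn_const (C := C) measure_Ioc_lt_top.ne).mono' hmeas ?_
  rw [ae_restrict_iff' measurableSet_Ioc]
  refine ae_of_all _ fun x hx => ?_
  rw [Real.norm_eq_abs, abs_div, abs_of_pos hx.1]
  rw [div_le_iff₀ hx.1]
  calc |f x - f 0| ≤ C * |x| := pv_lip f x
  _ = C * x := by rw [abs_of_pos hx.1]

lemma pv_intC0 : IntegrableOn (fun x : ℝ => f x / x) (Set.Ioi 1) := by
  have hmeas : AEStronglyMeasurable (fun x : ℝ => f x / x) (volume.restrict (Set.Ioi 1)) :=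
    (f.continuous.measurable.div measurable_id).aestronglyMeasurable
  refine (f.integrable.norm.integrableOn).mono' hmeas ?_
  rw [ae_restrict_iff' measurableSet_Ioi]
  refine ae_of_all _ fun x (hx : 1 < x) => ?_
  have hx0 : (0:ℝ) < x := by linarith
  rw [norm_div, Real.norm_eq_abs x, abs_of_pos hx0]
  exact div_le_self (norm_nonneg _) hx.le

lemma pv_intD1 (hμ : 0 < μ) :
    IntegrableOn (fun x : ℝ => deriv f x * Real.log (μ*x)) (Set.Ioc 0 1) := by
  set C := (SchwartzMap.seminorm ℝ 0 0) (SchwartzMap.derivCLM ℝ ℝ f) with hC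
  have hCpos : 0 ≤ C := apply_nonneg _ _
  have hmeas : AEStronglyMeasurable (fun x : ℝ => deriv f x * Real.log (μ*x))
      (volume.restrict (Set.Ioc 0 1)) := by
    have hd : Measurable (deriv (f : ℝ → ℝ)) := measurable_deriv _
    exact (hd.mul ((Real.measurable_log.comp (measurable_const.mul measurable_id)))).aestronglyMeasurable
  have hbint : IntegrableOn (fun x : ℝ => C * |Real.log μ| + C * |Real.log x|) (Set.Ioc 0 1) := by
    have h2 : IntegrableOn (fun x : ℝ => |Real.log x|) (Set.Ioc (0:ℝ) 1) := integrableOn_log_Ioc01.abs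
    exact ((integrableOn_const measure_Ioc_lt_top.ne)).add (h2.const_mul C)
  refine hbint.mono' hmeas ?_
  rw [ae_restrict_iff' measurableSet_Ioc]
  refine ae_of_all _ fun x hx => ?_
  rw [Real.norm_eq_abs, abs_mul, Real.log_mul hμ.ne' hx.1.ne']
  calc |deriv f x| * |Real.log μ + Real.log x| ≤ C * (|Real.log μ| + |Real.log x|) :=
        mul_le_mul (pv_derivBound f x) (abs_add_le _ _) (abs_nonneg _) hCpos
  _ = C * |Real.log μ| + C * |Real.log x| := by ring

lemma pv_intD2 (hμ : 0 < μ) :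
    IntegrableOn (fun x : ℝ => deriv f x * Real.log (μ*x)) (Set.Ioi 1) := by
  set C := (SchwartzMap.seminorm ℝ 3 0) (SchwartzMap.derivCLM ℝ ℝ f) with hC
  have hCd : ∀ x : ℝ, |x|^3 * |deriv f x| ≤ C := by
    intro x
    have := SchwartzMap.norm_pow_mul_le_seminorm ℝ (SchwartzMap.derivCLM ℝ ℝ f) 3 x
    simpa [SchwartzMap.derivCLM_apply, Real.norm_eq_abs] using this
  have hmeas : AEStronglyMeasurable (fun x : ℝ => deriv f x * Real.log (μ*x))
      (volume.restrict (Set.Ioi 1)) := by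
    have hd : Measurable (deriv (f : ℝ → ℝ)) := measurable_deriv _
    exact (hd.mul ((Real.measurable_log.comp (measurable_const.mul measurable_id)))).aestronglyMeasurable
  have hbint : IntegrableOn (fun x : ℝ => (C * (|Real.log μ| + 1)) * x ^ (-2 : ℝ)) (Set.Ioi 1) :=
    (integrableOn_Ioi_rpow_of_lt (by norm_num) one_pos).const_mul _
  refine hbint.mono' hmeas ?_
  rw [ae_restrict_iff' measurableSet_Ioi]
  refine ae_of_all _ fun x (hx : 1 < x) => ?_
  have hx0 : (0:ℝ) < x := by linarith
  have hrw : x ^ (-2:ℝ) = (x^2)⁻¹ := by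
    rw [show (-2:ℝ) = -(2:ℕ) by norm_num, Real.rpow_neg hx0.le, Real.rpow_natCast]
  have hlog : |Real.log (μ*x)| ≤ |Real.log μ| + x := by
    rw [Real.log_mul hμ.ne' hx0.ne']
    refine (abs_add_le _ _).trans (by
      have h1 : |Real.log x| = Real.log x := abs_of_nonneg (Real.log_nonneg hx.le)
      have h2 : Real.log x ≤ x - 1 := Real.log_le_sub_one_of_pos hx0
      linarith)
  have hd3 : |deriv f x| ≤ C / x^3 := by
    rw [le_div_iff₀ (by positivity)]
    have := hCd x
    rw [abs_of_pos hx0] at this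
    linarith [this]
  rw [Real.norm_eq_abs, abs_mul, hrw]
  have hCpos : 0 ≤ C := by
    have := hCd 0; simpa using le_trans (by positivity) this
  calc |deriv f x| * |Real.log (μ*x)| ≤ (C / x^3) * (|Real.log μ| + x) :=
        mul_le_mul hd3 hlog (abs_nonneg _) (by positivity)
  _ ≤ (C * (|Real.log μ| + 1)) * (x^2)⁻¹ := by
        rw [div_mul_eq_mul_div, mul_comm (C * (|Real.log μ| + 1)) _, ← div_eq_inv_mul]
        rw [div_le_div_iff₀ (by positivity) (by positivity)]
        have h1 : 1 ≤ x := hx.le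
        have h2 : 0 ≤ |Real.log μ| := abs_nonneg _
        have h3 : x^2 ≤ x^3 := pow_le_pow_right₀ h1 (by norm_num)
        nlinarith [mul_nonneg (mul_nonneg hCpos h2) (sub_nonneg.2 h3)]

end helpers
section key
variable {μ : ℝ} (f : SchwartzMap ℝ ℝ)

lemma pv_key1 (hμ : 0 < μ) :
    ∫ x in Set.Ioc (0:ℝ) 1, (deriv f x * Real.log (μ*x) + (f x - f 0)/x)
      = (f 1 - f 0) * Real.log μ := by
  set g1 : ℝ → ℝ := fun x => (f x - f 0) * Real.log (μ*x) with hg1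
  have hg10 : g1 0 = 0 := by simp [hg1]
  have hderiv : ∀ x ∈ Set.Ioo (0:ℝ) 1,
      HasDerivAt g1 (deriv f x * Real.log (μ*x) + (f x - f 0)/x) x := by
    intro x hx
    have hx0 : (0:ℝ) < x := hx.1
    have h1 : HasDerivAt (fun y : ℝ => f y - f 0) (deriv f x) x :=
      f.differentiableAt.hasDerivAt.sub_const _
    have h2 : HasDerivAt (fun y : ℝ => Real.log (μ*y)) (1/x) x := by
      have hm : HasDerivAt (fun y : ℝ => μ*y) μ x := by
        simpa using (hasDerivAt_id x).const_mul μ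
      have := hm.log (by positivity)
      convert this using 1
      field_simp
    have := h1.mul h2
    simpa [mul_one_div, div_eq_mul_inv, hg1, Pi.mul_def] using this
  have hcont : ContinuousOn g1 (Set.Icc 0 1) := by
    intro x hx
    rcases eq_or_lt_of_le hx.1 with h0 | h0
    · -- x = 0
      subst h0
      have htends : Tendsto g1 (nhdsWithin 0 (Set.Ioi 0)) (nhds 0) := by
        apply squeeze_zero_norm'
          (a := fun x => (SchwartzMap.seminorm ℝ 0 0) (SchwartzMap.derivCLM ℝ ℝ f) * |x * Real.log (μ*x)|)
        · filter_upwards [self_mem_nhdsWithin] with x (hx : 0 < x)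
          rw [hg1, Real.norm_eq_abs, abs_mul, abs_mul]
          calc |f x - f 0| * |Real.log (μ*x)|
              ≤ ((SchwartzMap.seminorm ℝ 0 0) (SchwartzMap.derivCLM ℝ ℝ f) * |x|) * |Real.log (μ*x)| :=
                mul_le_mul_of_nonneg_right (pv_lip f x) (abs_nonneg _)
          _ = (SchwartzMap.seminorm ℝ 0 0) (SchwartzMap.derivCLM ℝ ℝ f) * (|x| * |Real.log (μ*x)|) := by ring
        · have := (tendsto_mul_log_nhdsGT_zero μ hμ).abs.const_mul
            ((SchwartzMap.seminorm ℝ 0 0) (SchwartzMap.derivCLM ℝ ℝ f))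
          simpa [abs_mul] using this
      have hcw : ContinuousWithinAt g1 (Set.Ioi 0) 0 := by
        rw [ContinuousWithinAt, hg10]; exact htends
      have : ContinuousWithinAt g1 (Set.Icc 0 1 \ {0}) 0 := by
        refine hcw.mono ?_
        intro y hy
        exact lt_of_le_of_ne hy.1.1 (Ne.symm (by simpa using hy.2))
      rwa [continuousWithinAt_diff_self] at this
    · -- 0 < x
      have : ContinuousAt g1 x := by
        have hlog : ContinuousAt (fun y : ℝ => Real.log (μ*y)) x := by
          refine (Real.continuousAt_log (by positivity)).comp ?_
          exact (continuous_const.mul continuous_id).continuousAt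
        exact ((f.continuous.continuousAt).sub continuousAt_const).mul hlog
      exact this.continuousWithinAt
  have hint : IntervalIntegrable (fun x => deriv f x * Real.log (μ*x) + (f x - f 0)/x)
      volume 0 1 := by
    rw [intervalIntegrable_iff_integrableOn_Ioc_of_le zero_le_one]
    exact (pv_intD1 μ f hμ).add (pv_intA0 f)
  have hftc := intervalIntegral.integral_eq_sub_of_hasDerivAt_of_le zero_le_one hcont hderiv hint
  rw [intervalIntegral.integral_of_le zero_le_one] at hftc
  rw [hftc, hg10, hg1]
  simp [mul_one]

lemma pv_key2 (hμ : 0 < μ) :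
    ∫ x in Set.Ioi (1:ℝ), (deriv f x * Real.log (μ*x) + f x / x)
      = -(f 1 * Real.log μ) := by
  set g2 : ℝ → ℝ := fun x => f x * Real.log (μ*x) with hg2
  have hderiv : ∀ x ∈ Set.Ici (1:ℝ),
      HasDerivAt g2 (deriv f x * Real.log (μ*x) + f x / x) x := by
    intro x hx
    have hx0 : (0:ℝ) < x := lt_of_lt_of_le zero_lt_one hx
    have h2 : HasDerivAt (fun y : ℝ => Real.log (μ*y)) (1/x) x := by
      have hm : HasDerivAt (fun y : ℝ => μ*y) μ x := by
        simpa using (hasDerivAt_id x).const_mul μ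
      have := hm.log (by positivity)
      convert this using 1
      field_simp
    have := (f.differentiableAt.hasDerivAt).mul h2
    simpa [mul_one_div, div_eq_mul_inv, hg2, Pi.mul_def] using this
  have hC2 : ∀ x : ℝ, |x|^2 * |f x| ≤ (SchwartzMap.seminorm ℝ 2 0) f := by
    intro x
    have := SchwartzMap.norm_pow_mul_le_seminorm ℝ f 2 x
    simpa [Real.norm_eq_abs] using this
  have htop : Tendsto g2 atTop (nhds 0) := by
    apply squeeze_zero_norm' (a := fun x => μ * (SchwartzMap.seminorm ℝ 2 0) f / x)
    · filter_upwards [eventually_ge_atTop (max 1 μ⁻¹)] with x hx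
      have hx1 : (1:ℝ) ≤ x := le_trans (le_max_left _ _) hx
      have hx0 : (0:ℝ) < x := lt_of_lt_of_le zero_lt_one hx1
      have hμx : (1:ℝ) ≤ μ * x := by
        calc (1:ℝ) = μ * μ⁻¹ := by field_simp
        _ ≤ μ * x := by
          refine mul_le_mul_of_nonneg_left (le_trans (le_max_right 1 μ⁻¹) hx) hμ.le
      have hlog1 : |Real.log (μ*x)| = Real.log (μ*x) :=
        abs_of_nonneg (Real.log_nonneg hμx)
      have hlog2 : Real.log (μ*x) ≤ μ * x := by
        have := Real.log_le_sub_one_of_pos (show (0:ℝ) < μ*x by positivity)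
        linarith
      have hf2 : |f x| ≤ (SchwartzMap.seminorm ℝ 2 0) f / x^2 := by
        rw [le_div_iff₀ (by positivity)]
        have := hC2 x
        rw [abs_of_pos hx0] at this
        linarith
      rw [hg2, Real.norm_eq_abs, abs_mul, hlog1]
      calc |f x| * Real.log (μ*x) ≤ ((SchwartzMap.seminorm ℝ 2 0) f / x^2) * (μ * x) := by
            refine mul_le_mul hf2 hlog2 (Real.log_nonneg hμx) (by positivity)
      _ = μ * (SchwartzMap.seminorm ℝ 2 0) f / x := by
            field_simp
    · exact Tendsto.div_atTop tendsto_const_nhds tendsto_id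
  have hint : IntegrableOn (fun x => deriv f x * Real.log (μ*x) + f x / x) (Set.Ioi 1) :=
    (pv_intD2 μ f hμ).add (pv_intC0 f)
  have := MeasureTheory.integral_Ioi_of_hasDerivAt_of_tendsto' hderiv hint htop
  rw [this, hg2]
  simp [mul_one]

lemma pv_key_identity (hμ : 0 < μ) :
    -(∫ x in Set.Ioi (0:ℝ), deriv f x * Real.log (μ*x))
      = (∫ x in Set.Ioc (0:ℝ) 1, (f x - f 0)/x) + (∫ x in Set.Ioi (1:ℝ), f x / x)
        + Real.log μ * f 0 := by
  have hsplit : ∫ x in Set.Ioi (0:ℝ), deriv f x * Real.log (μ*x)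
      = (∫ x in Set.Ioc (0:ℝ) 1, deriv f x * Real.log (μ*x))
        + ∫ x in Set.Ioi (1:ℝ), deriv f x * Real.log (μ*x) := by
    rw [← MeasureTheory.setIntegral_union (Set.Ioc_disjoint_Ioi le_rfl) measurableSet_Ioi
      (pv_intD1 μ f hμ) (pv_intD2 μ f hμ)]
    rw [Set.Ioc_union_Ioi_eq_Ioi zero_le_one]
  have h1 : (∫ x in Set.Ioc (0:ℝ) 1, deriv f x * Real.log (μ*x))
      = (f 1 - f 0) * Real.log μ - ∫ x in Set.Ioc (0:ℝ) 1, (f x - f 0)/x := by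
    rw [← pv_key1 f hμ, MeasureTheory.integral_add (pv_intD1 μ f hμ) (pv_intA0 f)]
    ring
  have h2 : (∫ x in Set.Ioi (1:ℝ), deriv f x * Real.log (μ*x))
      = -(f 1 * Real.log μ) - ∫ x in Set.Ioi (1:ℝ), f x / x := by
    rw [← pv_key2 f hμ, MeasureTheory.integral_add (pv_intD2 μ f hμ) (pv_intC0 f)]
    ring
  rw [hsplit, h1, h2]
  ring

end key
noncomputable def pvP (a ε : ℝ) : ℝ := (1 - 2*ε + Real.sqrt (1 - 4*ε + 4*ε^2*a^2))/(2*ε)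

noncomputable def pvM (a ε : ℝ) : ℝ := (1 - a^2)/(pvP a ε)

set_option maxHeartbeats 800000 in
lemma pv_basic {a : ℝ} (ha : a^2 < 1) {ε : ℝ} (hε0 : 0 < ε) (hε8 : ε < 1/8) :
    0 < pvM a ε ∧ pvM a ε ≤ 1 ∧ 3 ≤ pvP a ε ∧
      {x : ℝ | ((1+x)^2 - a^2) * ε ≤ x} = Set.Icc (pvM a ε) (pvP a ε) := by
  have ha2 : 0 < 1 - a^2 := by nlinarith [sq_nonneg a]
  set s : ℝ := Real.sqrt (1 - 4*ε + 4*ε^2*a^2) with hs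
  have hDpos : 0 < 1 - 4*ε + 4*ε^2*a^2 := by nlinarith [sq_nonneg (ε*a)]
  have hsq : s^2 = 1 - 4*ε + 4*ε^2*a^2 := Real.sq_sqrt hDpos.le
  have hsnn : 0 ≤ s := Real.sqrt_nonneg _
  have hPval : pvP a ε = (1 - 2*ε + s)/(2*ε) := rfl
  have hPpos : 0 < pvP a ε := by
    rw [hPval]
    exact div_pos (by nlinarith) (by linarith)
  have hP3 : 3 ≤ pvP a ε := by
    rw [hPval, le_div_iff₀ (by linarith)]
    nlinarith
  have hMpos : 0 < pvM a ε := div_pos ha2 hPpos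
  have hM1 : pvM a ε ≤ 1 := by
    rw [pvM, div_le_one hPpos]
    nlinarith [sq_nonneg a]
  have hprod : pvM a ε * pvP a ε = 1 - a^2 := by
    rw [pvM]; field_simp
  have hPquad : ε * (pvP a ε)^2 - (1-2*ε) * (pvP a ε) + ε*(1-a^2) = 0 := by
    rw [hPval]
    field_simp
    ring_nf
    nlinarith [hsq]
  have hsum : ε * (pvM a ε + pvP a ε) = 1 - 2*ε := by
    have h2 : ε * (pvM a ε + pvP a ε) * pvP a ε = (1 - 2*ε) * pvP a ε := by
      have : pvM a ε * pvP a ε = 1 - a^2 := hprod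
      nlinarith [hPquad, this]
    exact mul_right_cancel₀ hPpos.ne' h2
  refine ⟨hMpos, hM1, hP3, ?_⟩
  ext x
  simp only [Set.mem_setOf_eq, Set.mem_Icc]
  have hquad : ((1+x)^2 - a^2)*ε - x = ε * ((x - pvM a ε) * (x - pvP a ε)) := by
    linear_combination x * hsum - ε * hprod
  have hMP : pvM a ε ≤ pvP a ε := le_trans hM1 (by linarith)
  constructor
  · intro h
    have hprod2 : (x - pvM a ε) * (x - pvP a ε) ≤ 0 := by nlinarith
    constructor
    · by_contra hc
      push_neg at hc
      nlinarith
    · by_contra hc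
      push_neg at hc
      nlinarith
  · rintro ⟨h1, h2⟩
    nlinarith [mul_nonpos_of_nonneg_of_nonpos (sub_nonneg.2 h1) (sub_nonpos.2 h2)]
lemma pv_tendsto_epsP (a : ℝ) :
    Tendsto (fun ε => ε * pvP a ε) (nhdsWithin 0 (Set.Ioi 0)) (nhds 1) := by
  have hqcont : Continuous (fun ε : ℝ => (1 - 2*ε + Real.sqrt (1 - 4*ε + 4*ε^2*a^2))/2) := by
    apply Continuous.div_const
    exact (continuous_const.sub (continuous_const.mul continuous_id)).add
      (Real.continuous_sqrt.comp (by continuity))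
  have hq0 : ((1 - 2*(0:ℝ) + Real.sqrt (1 - 4*0 + 4*0^2*a^2))/2) = 1 := by norm_num
  have hqten := (hqcont.tendsto 0).mono_left
    (nhdsWithin_le_nhds (s := Set.Ioi (0:ℝ)))
  rw [hq0] at hqten
  refine hqten.congr' ?_
  filter_upwards [self_mem_nhdsWithin] with ε (hε : 0 < ε)
  rw [pvP]
  field_simp

lemma pv_tendsto_Ptop (a : ℝ) :
    Tendsto (pvP a) (nhdsWithin 0 (Set.Ioi 0)) atTop := by
  refine Tendsto.congr' ?_
    (Filter.Tendsto.pos_mul_atTop one_pos (pv_tendsto_epsP a) tendsto_inv_nhdsGT_zero)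
  filter_upwards [self_mem_nhdsWithin] with ε (hε : 0 < ε)
  field_simp

lemma pv_tendsto_M0 (a : ℝ) :
    Tendsto (pvM a) (nhdsWithin 0 (Set.Ioi 0)) (nhds 0) := by
  have h := tendsto_const_nhds (x := 1 - a^2) (f := nhdsWithin (0:ℝ) (Set.Ioi 0))
  have h2 := h.mul (pv_tendsto_Ptop a).inv_tendsto_atTop
  rw [mul_zero] at h2
  refine h2.congr fun ε => ?_
  simp [pvM, div_eq_mul_inv]

set_option maxHeartbeats 800000 in
lemma pv_tendstoA (f : SchwartzMap ℝ ℝ) (M : ℝ → ℝ)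
    (hM0 : Tendsto M (nhdsWithin 0 (Set.Ioi 0)) (nhds 0))
    (hMpos : ∀ᶠ ε in nhdsWithin (0:ℝ) (Set.Ioi 0), 0 < M ε) :
    Tendsto (fun ε => ∫ x in Set.Ioc (M ε) 1, (f x - f 0)/x)
      (nhdsWithin 0 (Set.Ioi 0))
      (nhds (∫ x in Set.Ioc (0:ℝ) 1, (f x - f 0)/x)) := by
  set Cd : ℝ := (SchwartzMap.seminorm ℝ 0 0) (SchwartzMap.derivCLM ℝ ℝ f) with hCd
  have hCd0 : 0 ≤ Cd := apply_nonneg _ _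
  set g : ℝ → ℝ := fun x => (f x - f 0)/x with hg
  have hgm : Measurable g := (f.continuous.measurable.sub measurable_const).div measurable_id
  have key := MeasureTheory.tendsto_integral_filter_of_dominated_convergence
    (μ := volume) (l := nhdsWithin (0:ℝ) (Set.Ioi 0))
    (F := fun ε x => (Set.Ioc (M ε) 1).indicator g x)
    (f := (Set.Ioc (0:ℝ) 1).indicator g)
    (bound := (Set.Ioc (0:ℝ) 1).indicator (fun _ => Cd))
    (Eventually.of_forall fun ε =>
      (hgm.indicator measurableSet_Ioc).aestronglyMeasurable)
    (by
      filter_upwards [hMpos] with ε hMp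
      refine ae_of_all _ fun x => ?_
      by_cases hx : x ∈ Set.Ioc (M ε) 1
      · rw [Set.indicator_of_mem hx]
        have hx0 : 0 < x := lt_trans hMp hx.1
        have hxIoc : x ∈ Set.Ioc (0:ℝ) 1 := ⟨hx0, hx.2⟩
        rw [Set.indicator_of_mem hxIoc, hg, Real.norm_eq_abs, abs_div, abs_of_pos hx0,
          div_le_iff₀ hx0]
        calc |f x - f 0| ≤ Cd * |x| := pv_lip f x
        _ = Cd * x := by rw [abs_of_pos hx0]
      · rw [Set.indicator_of_notMem hx]
        simpa using Set.indicator_nonneg (fun _ _ => hCd0) x)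
    (by
      rw [MeasureTheory.integrable_indicator_iff measurableSet_Ioc]
      exact integrableOn_const (C := Cd) measure_Ioc_lt_top.ne)
    (by
      refine ae_of_all _ fun x => ?_
      by_cases hx : x ∈ Set.Ioc (0:ℝ) 1
      · rw [Set.indicator_of_mem hx]
        refine tendsto_const_nhds.congr' ?_
        filter_upwards [hM0.eventually_lt_const hx.1] with ε hε
        rw [Set.indicator_of_mem (Set.mem_Ioc.2 ⟨hε, hx.2⟩)]
      · rw [Set.indicator_of_notMem hx]
        rw [Set.mem_Ioc, not_and_or, not_lt, not_le] at hx
        refine tendsto_const_nhds.congr' ?_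
        rcases hx with hx0 | hx1
        · filter_upwards [hMpos] with ε hε
          exact (Set.indicator_of_notMem
            (fun hmem => absurd (lt_trans hε hmem.1) (not_lt.2 hx0)) _).symm
        · refine Eventually.of_forall fun ε => ?_
          exact (Set.indicator_of_notMem
            (fun hmem => absurd hx1 (not_lt.2 hmem.2)) _).symm)
  simpa only [MeasureTheory.integral_indicator measurableSet_Ioc] using key

set_option maxHeartbeats 800000 in
lemma pv_tendstoC (f : SchwartzMap ℝ ℝ) (P : ℝ → ℝ)
    (hPtop : Tendsto P (nhdsWithin 0 (Set.Ioi 0)) atTop) :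
    Tendsto (fun ε => ∫ x in Set.Ioc (1:ℝ) (P ε), f x / x)
      (nhdsWithin 0 (Set.Ioi 0))
      (nhds (∫ x in Set.Ioi (1:ℝ), f x / x)) := by
  have hhm : Measurable (fun x : ℝ => f x / x) := f.continuous.measurable.div measurable_id
  have key := MeasureTheory.tendsto_integral_filter_of_dominated_convergence
    (μ := volume) (l := nhdsWithin (0:ℝ) (Set.Ioi 0))
    (F := fun ε x => (Set.Ioc (1:ℝ) (P ε)).indicator (fun x => f x / x) x)
    (f := (Set.Ioi (1:ℝ)).indicator (fun x => f x / x))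
    (bound := fun x => ‖f x‖)
    (Eventually.of_forall fun ε =>
      (hhm.indicator measurableSet_Ioc).aestronglyMeasurable)
    (by
      refine Eventually.of_forall fun ε => ae_of_all _ fun x => ?_
      show ‖(Set.Ioc (1:ℝ) (P ε)).indicator (fun x => f x / x) x‖ ≤ ‖f x‖
      by_cases hx : x ∈ Set.Ioc (1:ℝ) (P ε)
      · rw [Set.indicator_of_mem hx]
        have hx0 : (0:ℝ) < x := lt_trans zero_lt_one hx.1
        rw [norm_div, Real.norm_eq_abs x, abs_of_pos hx0]
        exact div_le_self (norm_nonneg _) hx.1.le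
      · rw [Set.indicator_of_notMem hx]
        simp)
    f.integrable.norm
    (by
      refine ae_of_all _ fun x => ?_
      by_cases hx : x ∈ Set.Ioi (1:ℝ)
      · rw [Set.indicator_of_mem hx]
        refine tendsto_const_nhds.congr' ?_
        filter_upwards [hPtop.eventually_ge_atTop x] with ε hε
        rw [Set.indicator_of_mem (Set.mem_Ioc.2 ⟨hx, hε⟩)]
      · rw [Set.indicator_of_notMem hx]
        refine tendsto_const_nhds.congr' ?_
        refine Eventually.of_forall fun ε => ?_
        exact (Set.indicator_of_notMem (fun hmem => absurd hmem.1 hx) _).symm)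
  simpa only [MeasureTheory.integral_indicator measurableSet_Ioc,
    MeasureTheory.integral_indicator measurableSet_Ioi] using key
set_option maxHeartbeats 1000000 in
/-- For `a² < 1` and `μ > 0`, the distributions
`f ↦ ∫ f(x) (1/x) Θ(x - [(1+x)²-a²]ε) dx + ln(μ(1-a²)ε e^{-γ}) f(0)` converge
as `ε → 0⁺`, for every Schwartz `f`, to
`⟨pv_μ Θ(x)/x, f⟩ = -∫₀^∞ f'(x) ln(μx) dx - γ f(0)`. -/
theorem pvTheta_coordinate_limit (a μ : ℝ) (ha : a^2 < 1) (hμ : 0 < μ)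
    (f : SchwartzMap ℝ ℝ) :
    Tendsto (fun ε : ℝ =>
        (∫ x in {x : ℝ | ((1+x)^2 - a^2) * ε ≤ x}, f x / x) +
          Real.log (μ * (1 - a^2) * ε * Real.exp (-Real.eulerMascheroniConstant)) * f 0)
      (nhdsWithin 0 (Set.Ioi 0))
      (nhds (-(∫ x in Set.Ioi (0 : ℝ), deriv f x * Real.log (μ*x))
        - Real.eulerMascheroniConstant * f 0)) := by
  have ha2 : 0 < 1 - a^2 := by nlinarith [sq_nonneg a]
  have hεP := pv_tendsto_epsP a
  have hPtop := pv_tendsto_Ptop a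
  have hM0 := pv_tendsto_M0 a
  have hMpos : ∀ᶠ ε in nhdsWithin (0:ℝ) (Set.Ioi 0), 0 < pvM a ε := by
    filter_upwards [Ioo_mem_nhdsGT_of_mem (show (0:ℝ) ∈ Set.Ico 0 (1/8) from ⟨le_rfl, by norm_num⟩)] with ε hε
    exact (pv_basic ha hε.1 hε.2).1
  have hTA := pv_tendstoA f (pvM a) hM0 hMpos
  have hTC := pv_tendstoC f (pvP a) hPtop
  have hlogP : Tendsto (fun ε => Real.log (ε * pvP a ε)) (nhdsWithin 0 (Set.Ioi 0))
      (nhds 0) := by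
    have := (Real.continuousAt_log one_ne_zero).tendsto.comp hεP
    simpa [Function.comp_def] using this
  have hT3 : Tendsto (fun ε => (Real.log μ - Real.eulerMascheroniConstant
        + Real.log (ε * pvP a ε)) * f 0)
      (nhdsWithin 0 (Set.Ioi 0))
      (nhds ((Real.log μ - Real.eulerMascheroniConstant) * f 0)) := by
    have h2 := (tendsto_const_nhds
      (x := Real.log μ - Real.eulerMascheroniConstant)
      (f := nhdsWithin (0:ℝ) (Set.Ioi 0))).add hlogP
    rw [add_zero] at h2
    exact h2.mul_const (f 0)
  have heq : ∀ᶠ ε in nhdsWithin (0:ℝ) (Set.Ioi 0),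
      (∫ x in Set.Ioc (pvM a ε) 1, (f x - f 0)/x)
        + (∫ x in Set.Ioc (1:ℝ) (pvP a ε), f x / x)
        + (Real.log μ - Real.eulerMascheroniConstant + Real.log (ε * pvP a ε)) * f 0
      = (∫ x in {x : ℝ | ((1+x)^2 - a^2) * ε ≤ x}, f x / x) +
          Real.log (μ * (1 - a^2) * ε * Real.exp (-Real.eulerMascheroniConstant)) * f 0 := by
    filter_upwards [Ioo_mem_nhdsGT_of_mem (show (0:ℝ) ∈ Set.Ico 0 (1/8) from ⟨le_rfl, by norm_num⟩)] with ε hε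
    obtain ⟨hε0, hε8⟩ := hε
    obtain ⟨hMp, hM1, hP3, hset⟩ := pv_basic ha hε0 hε8
    have hP1 : (1:ℝ) ≤ pvP a ε := by linarith
    have hPpos : 0 < pvP a ε := by linarith
    have hMP : pvM a ε ≤ pvP a ε := le_trans hM1 hP1
    rw [hset, MeasureTheory.integral_Icc_eq_integral_Ioc]
    have hcont1 : ContinuousOn (fun x : ℝ => f x / x) (Set.uIcc (pvM a ε) 1) := by
      rw [Set.uIcc_of_le hM1]
      exact (f.continuous.continuousOn).div continuousOn_id
        (fun x hx => ne_of_gt (lt_of_lt_of_le hMp hx.1))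
    have hcont2 : ContinuousOn (fun x : ℝ => f x / x) (Set.uIcc 1 (pvP a ε)) := by
      rw [Set.uIcc_of_le hP1]
      exact (f.continuous.continuousOn).div continuousOn_id
        (fun x hx => ne_of_gt (lt_of_lt_of_le zero_lt_one hx.1))
    have hsplit : ∫ x in Set.Ioc (pvM a ε) (pvP a ε), f x / x
        = (∫ x in Set.Ioc (pvM a ε) 1, f x / x)
          + ∫ x in Set.Ioc (1:ℝ) (pvP a ε), f x / x := by
      rw [← intervalIntegral.integral_of_le hMP, ← intervalIntegral.integral_of_le hM1,
        ← intervalIntegral.integral_of_le hP1,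
        ← intervalIntegral.integral_add_adjacent_intervals
          hcont1.intervalIntegrable hcont2.intervalIntegrable]
    have hgcont : ContinuousOn (fun x : ℝ => (f x - f 0)/x) (Set.uIcc (pvM a ε) 1) := by
      rw [Set.uIcc_of_le hM1]
      exact ((f.continuous.continuousOn).sub continuousOn_const).div continuousOn_id
        (fun x hx => ne_of_gt (lt_of_lt_of_le hMp hx.1))
    have hicont : ContinuousOn (fun x : ℝ => f 0 * x⁻¹) (Set.uIcc (pvM a ε) 1) := by
      rw [Set.uIcc_of_le hM1]
      exact continuousOn_const.mul (continuousOn_id.inv₀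
        (fun x hx => ne_of_gt (lt_of_lt_of_le hMp hx.1)))
    have hsub : ∫ x in Set.Ioc (pvM a ε) 1, f x / x
        = (∫ x in Set.Ioc (pvM a ε) 1, (f x - f 0)/x)
          + f 0 * Real.log (1/(pvM a ε)) := by
      rw [← intervalIntegral.integral_of_le hM1, ← intervalIntegral.integral_of_le hM1]
      rw [intervalIntegral.integral_congr
        (g := fun x => (f x - f 0)/x + f 0 * x⁻¹) (by
          intro x hx
          rw [Set.uIcc_of_le hM1] at hx
          have hx0 : 0 < x := lt_of_lt_of_le hMp hx.1
          field_simp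
          ring)]
      rw [intervalIntegral.integral_add hgcont.intervalIntegrable hicont.intervalIntegrable,
        intervalIntegral.integral_const_mul, integral_inv_of_pos hMp one_pos]
    rw [hsplit, hsub]
    have hlogM : Real.log (1/(pvM a ε)) = Real.log (pvP a ε) - Real.log (1-a^2) := by
      rw [pvM, one_div_div, Real.log_div hPpos.ne' ha2.ne']
    have hlogμ : Real.log (μ * (1 - a^2) * ε * Real.exp (-Real.eulerMascheroniConstant))
        = Real.log μ + Real.log (1-a^2) + Real.log ε - Real.eulerMascheroniConstant := by
      rw [Real.log_mul (by positivity) (Real.exp_ne_zero _), Real.log_exp,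
        Real.log_mul (by positivity) hε0.ne', Real.log_mul hμ.ne' ha2.ne']
      ring
    have hlogεP : Real.log (ε * pvP a ε) = Real.log ε + Real.log (pvP a ε) :=
      Real.log_mul hε0.ne' hPpos.ne'
    rw [hlogM, hlogμ, hlogεP]
    ring
  have hval : -(∫ x in Set.Ioi (0 : ℝ), deriv f x * Real.log (μ*x))
      - Real.eulerMascheroniConstant * f 0
      = (∫ x in Set.Ioc (0:ℝ) 1, (f x - f 0)/x) + (∫ x in Set.Ioi (1:ℝ), f x / x)
        + (Real.log μ - Real.eulerMascheroniConstant) * f 0 := by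
    rw [pv_key_identity f hμ]
    ring
  rw [hval]
  exact Tendsto.congr' heq ((hTA.add hTC).add hT3)
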